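/- Let A be a finite-dimensional complete left-symmetric algebra over ℂ and let H be a Cartan subalgebra of the commutator Lie algebra of A for which the root decomposition is canonical. For a function χ : H → ℂ write A^χ = ⋂_{x∈H} maxGenEigenspace(L(x), χ(x)). Then for all functions λ, μ : H → ℂ, A^λ · A^μ ⊆ A^{λ+μ}, i.e., if v ∈ A^λ and w ∈ A^μ then v·w ∈ A^{λ+μ} (where (λ+μ)(x) = λ(x)+μ(x)). In particular, A^0 is a subalgebra of A. -/

import Mathlib

open TensorProduct in
/-- Binomial-theorem lemma: if `F` is "equivariant" for `mul` with respect to `D` (on the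
left factor) and `E` (on the right factor), and `D`, `E` kill `v`, `w` after finitely many
steps, then `F` kills `mul v w` after finitely many steps. -/
lemma aux_mul_maxGen {A : Type*} [AddCommGroup A] [Module ℂ A]
    (mul : A →ₗ[ℂ] A →ₗ[ℂ] A) (D E F : Module.End ℂ A)
    (h : ∀ v w : A, F (mul v w) = mul (D v) w + mul v (E w))
    {v w : A} {k l : ℕ} (hv : (D ^ k) v = 0) (hw : (E ^ l) w = 0) :
    ∃ n : ℕ, (F ^ n) (mul v w) = 0 := by
  let g : A ⊗[ℂ] A →ₗ[ℂ] A := TensorProduct.lift mul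
  let f₁ : Module.End ℂ (A ⊗[ℂ] A) := D.rTensor A
  let f₂ : Module.End ℂ (A ⊗[ℂ] A) := E.lTensor A
  have h_comm_square : F ∘ₗ g = g ∘ₗ (f₁ + f₂) := by
    ext a b
    simp [g, f₁, f₂, h a b]
  have hf₁ : (f₁ ^ k) (v ⊗ₜ[ℂ] w) = 0 := by
    simp [f₁, LinearMap.rTensor_pow, hv]
  have hf₂ : (f₂ ^ l) (v ⊗ₜ[ℂ] w) = 0 := by
    simp [f₂, LinearMap.lTensor_pow, hw]
  have hf_comm : Commute f₁ f₂ := by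
    ext a b
    simp [f₁, f₂]
  refine ⟨k + l - 1, ?_⟩
  have hg : g (v ⊗ₜ[ℂ] w) = mul v w := by simp [g]
  have key : (F ^ (k + l - 1)) (g (v ⊗ₜ[ℂ] w)) =
      g (((f₁ + f₂) ^ (k + l - 1)) (v ⊗ₜ[ℂ] w)) := by
    rw [← LinearMap.comp_apply, Module.End.commute_pow_left_of_commute h_comm_square,
      LinearMap.comp_apply]
  rw [← hg, key, hf_comm.add_pow']
  simp only [LinearMap.coe_sum, Finset.sum_apply, LinearMap.smul_apply]
  rw [map_sum]
  apply Finset.sum_eq_zero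
  rintro ⟨i, j⟩ hij
  suffices hz : (f₁ ^ i * f₂ ^ j) (v ⊗ₜ[ℂ] w) = 0 by
    rw [hz, smul_zero, map_zero]
  cases' Nat.le_or_le_of_add_eq_add_pred (Finset.HasAntidiagonal.mem_antidiagonal.mp hij) with hi hj
  · rw [(hf_comm.pow_pow i j).eq, Module.End.mul_apply, Module.End.pow_map_zero_of_le hi hf₁,
      LinearMap.map_zero]
  · rw [Module.End.mul_apply, Module.End.pow_map_zero_of_le hj hf₂, LinearMap.map_zero]

/-- For the canonical decomposition of a finite-dimensional complete left-symmetric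
algebra over `ℂ` one has `A^λ · A^μ ⊆ A^{λ+μ}`; in particular `A^0` is a subalgebra. -/
theorem leftSymmetric_canonical_root_mul (A : Type*)
    [LieRing A] [LieAlgebra ℂ A] [FiniteDimensional ℂ A]
    (mul : A →ₗ[ℂ] A →ₗ[ℂ] A)
    (hbr : ∀ x y : A, ⁅x, y⁆ = mul x y - mul y x)
    (hls : ∀ x y z : A,
      mul x (mul y z) - mul (mul x y) z = mul y (mul x z) - mul (mul y x) z)
    (hcomplete : ∀ x : A, IsNilpotent (mul.flip x))
    (H : LieSubalgebra ℂ A) (hH : H.IsCartanSubalgebra)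
    (hcanon : ∀ χ : H → ℂ,
      (⨅ x : H, Module.End.maxGenEigenspace (mul (x : A)) (χ x)) =
        ⨅ x : H, Module.End.maxGenEigenspace (mul (x : A) - mul.flip (x : A)) (χ x)) :
    ∀ lam mu : H → ℂ, ∀ v w : A,
      v ∈ (⨅ x : H, Module.End.maxGenEigenspace (mul (x : A)) (lam x)) →
      w ∈ (⨅ x : H, Module.End.maxGenEigenspace (mul (x : A)) (mu x)) →
      mul v w ∈ ⨅ x : H, Module.End.maxGenEigenspace (mul (x : A)) (lam x + mu x) := by
  intro lam mu v w hv hw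
  rw [hcanon lam] at hv
  rw [Submodule.mem_iInf] at hv hw ⊢
  intro x
  have hv' := hv x
  have hw' := hw x
  rw [Module.End.mem_maxGenEigenspace] at hv' hw' ⊢
  obtain ⟨k, hk⟩ := hv'
  obtain ⟨l, hl⟩ := hw'
  refine aux_mul_maxGen mul
    ((mul (x : A) - mul.flip (x : A)) - lam x • (1 : Module.End ℂ A))
    (mul (x : A) - mu x • (1 : Module.End ℂ A))
    (mul (x : A) - (lam x + mu x) • (1 : Module.End ℂ A)) ?_ hk hl
  intro a b
  have h1 := hls (x : A) a b
  simp only [LinearMap.sub_apply, LinearMap.add_apply, LinearMap.smul_apply, Module.End.one_apply,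
    LinearMap.flip_apply, map_sub, map_smul, LinearMap.map_smul₂, add_smul]
  rw [sub_eq_iff_eq_add] at h1
  rw [h1]
  abel
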